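/- For every 0 < α < 1 and all integers 1 ≤ j ≤ p: (∑_{n=0}^{j} + ∑_{n=p+1}^{j+p}) k^α(n)·k^{α+1}(j+p-n) ≤ (2^{α+1}·(1 + (1-α)/(2(1+α)))^α − 1)·k^{α+1}(j)·k^{α+1}(p). -/

import Mathlib

noncomputable def cesK (α : ℝ) (n : ℕ) : ℝ :=
  Real.Gamma ((n : ℝ) + α) / (Real.Gamma α * Real.Gamma ((n : ℝ) + 1))

lemma cesK_pos {α : ℝ} (hα : 0 < α) (n : ℕ) : 0 < cesK α n := by
  unfold cesK
  have h1 : 0 < Real.Gamma ((n:ℝ) + α) := Real.Gamma_pos_of_pos (by positivity)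
  have h2 : 0 < Real.Gamma α := Real.Gamma_pos_of_pos hα
  have h3 : 0 < Real.Gamma ((n:ℝ) + 1) := Real.Gamma_pos_of_pos (by positivity)
  positivity

lemma cesK_zero {α : ℝ} (hα : 0 < α) : cesK α 0 = 1 := by
  have h2 : Real.Gamma α ≠ 0 := (Real.Gamma_pos_of_pos hα).ne'
  simp [cesK, Real.Gamma_one, h2]

lemma cesK_succ {α : ℝ} (hα : 0 < α) (n : ℕ) :
    cesK α (n + 1) = cesK α n * (((n : ℝ) + α) / ((n : ℝ) + 1)) := by
  unfold cesK
  have hna : ((n:ℝ) + α) ≠ 0 := by positivity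
  have hn1 : ((n:ℝ) + 1) ≠ 0 := by positivity
  have e1 : ((n + 1 : ℕ) : ℝ) + α = ((n:ℝ) + α) + 1 := by push_cast; ring
  have e2 : ((n + 1 : ℕ) : ℝ) + 1 = ((n:ℝ) + 1) + 1 := by push_cast; ring
  rw [e1, e2, Real.Gamma_add_one hna, Real.Gamma_add_one hn1]
  have h2 : Real.Gamma α ≠ 0 := (Real.Gamma_pos_of_pos hα).ne'
  have h3 : Real.Gamma ((n:ℝ) + 1) ≠ 0 := (Real.Gamma_pos_of_pos (by positivity)).ne'
  field_simp

lemma cesK_shift {α : ℝ} (hα : 0 < α) (n : ℕ) :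
    cesK (α + 1) n = cesK α n * (((n : ℝ) + α) / α) := by
  unfold cesK
  have hna : ((n:ℝ) + α) ≠ 0 := by positivity
  have e1 : ((n : ℕ) : ℝ) + (α + 1) = ((n:ℝ) + α) + 1 := by push_cast; ring
  rw [e1, Real.Gamma_add_one hna, Real.Gamma_add_one hα.ne']
  have h2 : Real.Gamma α ≠ 0 := (Real.Gamma_pos_of_pos hα).ne'
  have h3 : Real.Gamma ((n:ℝ) + 1) ≠ 0 := (Real.Gamma_pos_of_pos (by positivity)).ne'
  field_simp

lemma cesK_shift_succ {α : ℝ} (hα : 0 < α) (q : ℕ) :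
    cesK (α + 1) q = cesK α (q + 1) * (((q : ℝ) + 1) / α) := by
  rw [cesK_shift hα, cesK_succ hα]
  have hq1 : ((q:ℝ) + 1) ≠ 0 := by positivity
  have hqa : ((q:ℝ) + α) ≠ 0 := by positivity
  field_simp

lemma cesK_sum {α : ℝ} (hα : 0 < α) (M : ℕ) :
    ∑ n ∈ Finset.range (M + 1), cesK α n = cesK (α + 1) M := by
  induction M with
  | zero => simp [cesK_zero hα, cesK_zero (by linarith : (0:ℝ) < α + 1)]
  | succ M ih =>
    rw [Finset.sum_range_succ, ih, cesK_succ (by linarith : (0:ℝ) < α + 1) M,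
      cesK_shift hα M, cesK_succ hα M]
    have h1 : ((M:ℝ) + 1) ≠ 0 := by positivity
    have h2 : ((M:ℝ) + α) ≠ 0 := by positivity
    have hk := cesK_pos hα M
    field_simp
    ring

lemma cesK_mono {β : ℝ} (hβ : 1 ≤ β) : Monotone (cesK β) := by
  have hβ0 : 0 < β := lt_of_lt_of_le one_pos hβ
  apply monotone_nat_of_le_succ
  intro n
  rw [cesK_succ hβ0 n]
  have hk := cesK_pos hβ0 n
  have h : (1:ℝ) ≤ ((n:ℝ) + β) / ((n:ℝ) + 1) := by
    rw [le_div_iff₀ (by positivity)]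
    linarith
  nlinarith

lemma cesK_anti {α : ℝ} (h0 : 0 < α) (h1 : α ≤ 1) : Antitone (cesK α) := by
  apply antitone_nat_of_succ_le
  intro n
  rw [cesK_succ h0 n]
  have hk := cesK_pos h0 n
  have h : ((n:ℝ) + α) / ((n:ℝ) + 1) ≤ 1 := by
    rw [div_le_one (by positivity)]
    linarith
  nlinarith

/-- weighted AM-GM: `y^α ≤ 1 - α + α y`. -/
lemma rpow_le_lin {y α : ℝ} (hy : 0 ≤ y) (h0 : 0 ≤ α) (h1 : α ≤ 1) :
    y ^ α ≤ 1 - α + α * y := by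
  have := Real.geom_mean_le_arith_mean2_weighted (sub_nonneg.2 h1) h0 zero_le_one hy
    (by ring)
  simpa using this

/-- key step: for `1 < x`, `1 + α/x ≤ (x/(x-1))^α`. -/
lemma one_add_div_le_rpow {x α : ℝ} (h0 : 0 ≤ α) (h1 : α ≤ 1) (hx : 1 < x) :
    1 + α / x ≤ (x / (x - 1)) ^ α := by
  have hx0 : 0 < x := by linarith
  have hx1 : 0 < x - 1 := by linarith
  have hy : (0:ℝ) ≤ (x - 1) / x := by positivity
  have h := rpow_le_lin hy h0 h1
  have hz : 1 - α + α * ((x - 1) / x) = 1 - α / x := by field_simp; ring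
  rw [hz] at h
  have hzpos : 0 < 1 - α / x := by
    rw [sub_pos, div_lt_one hx0]; linarith
  have hyα : 0 < ((x - 1) / x) ^ α := Real.rpow_pos_of_pos (by positivity) α
  have hinv : (x / (x - 1)) ^ α = (((x - 1) / x) ^ α)⁻¹ := by
    rw [show x / (x - 1) = ((x - 1) / x)⁻¹ by rw [inv_div], Real.inv_rpow hy]
  rw [hinv]
  have h2 : (1 - α / x)⁻¹ ≤ (((x - 1) / x) ^ α)⁻¹ :=
    inv_anti₀ hyα h
  refine le_trans ?_ h2
  rw [inv_eq_one_div, le_div_iff₀ hzpos]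
  nlinarith [sq_nonneg (α / x)]

lemma cesK_growth {α : ℝ} (h0 : 0 < α) (h1 : α ≤ 1) {p : ℕ} (hp : 1 ≤ p) (j : ℕ) :
    cesK (α + 1) (p + j) ≤ (((p : ℝ) + j) / p) ^ α * cesK (α + 1) p := by
  have hA : (0:ℝ) < α + 1 := by linarith
  have hp0 : (0:ℝ) < p := by exact_mod_cast hp
  induction j with
  | zero => simp [div_self hp0.ne']
  | succ j ih =>
    push_cast
    have hcast : ((p + j : ℕ) : ℝ) = (p:ℝ) + j := by push_cast; ring
    have hn : (0:ℝ) < (p:ℝ) + j := by positivity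
    have hstep := cesK_succ hA (p + j)
    rw [show p + (j+1) = (p + j) + 1 from rfl, hstep, hcast]
    have hratio : (((p:ℝ) + j) + (α+1)) / (((p:ℝ) + j) + 1) = 1 + α / ((p:ℝ) + j + 1) := by
      field_simp
      ring
    rw [hratio]
    have hx : (1:ℝ) < (p:ℝ) + j + 1 := by linarith
    have hkey := one_add_div_le_rpow h0.le h1 hx
    have hsub : ((p:ℝ) + j + 1) - 1 = (p:ℝ) + j := by ring
    rw [hsub] at hkey
    have hkpos := cesK_pos hA p
    have hfac : (0:ℝ) ≤ (((p:ℝ) + j) / p) ^ α := Real.rpow_nonneg (by positivity) α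
    calc cesK (α+1) (p+j) * (1 + α / ((p:ℝ) + j + 1))
        ≤ ((((p:ℝ) + j) / p) ^ α * cesK (α+1) p) * ((((p:ℝ)+j+1) / ((p:ℝ)+j)) ^ α) := by
          apply mul_le_mul ih hkey (by positivity)
          positivity
      _ = (((p:ℝ) + ((j:ℝ)+1)) / p) ^ α * cesK (α+1) p := by
          rw [mul_right_comm, ← Real.mul_rpow (by positivity) (by positivity)]
          congr 2
          field_simp
          ring

lemma two_rpow_lb {α : ℝ} (h0 : 0 < α) (h1 : α < 1) : 1 + α/2 ≤ (2:ℝ) ^ α := by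
  have h12 := rpow_le_lin (by norm_num : (0:ℝ) ≤ 1/2) h0.le h1.le
  have hr : 1 - α + α * (1/2) = 1 - α/2 := by ring
  rw [hr] at h12
  have hz : (0:ℝ) < 1 - α/2 := by linarith
  have hpp : (0:ℝ) < (1/2:ℝ) ^ α := Real.rpow_pos_of_pos (by norm_num) α
  have hmul : (2:ℝ)^α * (1/2:ℝ)^α = 1 := by
    rw [← Real.mul_rpow (by norm_num) (by norm_num)]
    norm_num
  have h2 : (2:ℝ) ^ α = (((1/2:ℝ)) ^ α)⁻¹ := by
    field_simp
    linarith [hmul]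
  rw [h2]
  have h3 : (1 - α/2)⁻¹ ≤ (((1/2:ℝ)) ^ α)⁻¹ := inv_anti₀ hpp h12
  refine le_trans ?_ h3
  rw [inv_eq_one_div, le_div_iff₀ hz]
  nlinarith [sq_nonneg α]

lemma base_rpow_lb {α : ℝ} (h0 : 0 < α) (h1 : α < 1) :
    (3+α)/(3+α^2) ≤ (1 + (1-α)/(2*(1+α))) ^ α := by
  have hy : (0:ℝ) ≤ (2+2*α)/(3+α) := by positivity
  have hb : (1 + (1-α)/(2*(1+α))) = ((2+2*α)/(3+α))⁻¹ := by
    rw [inv_div]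
    field_simp
    ring
  have ham := rpow_le_lin hy h0.le h1.le
  have hamr : 1 - α + α * ((2+2*α)/(3+α)) = (3+α^2)/(3+α) := by
    field_simp
    ring
  rw [hamr] at ham
  have hpp : (0:ℝ) < ((2+2*α)/(3+α)) ^ α := Real.rpow_pos_of_pos (by positivity) α
  rw [hb, Real.inv_rpow hy]
  have h3 : ((3+α^2)/(3+α))⁻¹ ≤ (((2+2*α)/(3+α)) ^ α)⁻¹ := inv_anti₀ hpp ham
  refine le_trans ?_ h3
  rw [inv_div]

lemma scalar_ineq {α : ℝ} (h0 : 0 < α) (h1 : α < 1) :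
    (2:ℝ) ^ α + α/(α+1) ≤ (2:ℝ) ^ (α+1) * (1 + (1-α)/(2*(1+α))) ^ α - 1 := by
  have hu := two_rpow_lb h0 h1
  have hv := base_rpow_lb h0 h1
  have hupos : (0:ℝ) < (2:ℝ) ^ α := Real.rpow_pos_of_pos (by norm_num) α
  rw [Real.rpow_add (by norm_num : (0:ℝ) < 2), Real.rpow_one]
  set u := (2:ℝ) ^ α with hudef
  set v := (1 + (1-α)/(2*(1+α))) ^ α with hvdef
  have h3 : u * ((3+α)/(3+α^2)) ≤ u * v := mul_le_mul_of_nonneg_left hv hupos.le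
  have hcoef : (0:ℝ) < (α+1)*(3+2*α-α^2) := by nlinarith
  have hN : 0 ≤ (α+1)*(3+2*α-α^2)*u - (3+α^2)*(2*α+1) := by
    nlinarith [mul_le_mul_of_nonneg_left hu hcoef.le,
      mul_nonneg (mul_nonneg h0.le (by linarith : (0:ℝ) ≤ 1-α))
        (by positivity : (0:ℝ) ≤ α^2+6*α+1)]
  have hden : (0:ℝ) < (3+α^2)*(α+1) := by positivity
  have hfrac : 2*(u*((3+α)/(3+α^2))) - 1 - u - α/(α+1)
      = ((α+1)*(3+2*α-α^2)*u - (3+α^2)*(2*α+1)) / ((3+α^2)*(α+1)) := by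
    field_simp
    ring
  have h5 : 0 ≤ 2*(u*((3+α)/(3+α^2))) - 1 - u - α/(α+1) := by
    rw [hfrac]
    exact div_nonneg hN hden.le
  nlinarith [h3, h5]

theorem stmt8 (α : ℝ) (h0 : 0 < α) (h1 : α < 1) (j p : ℕ) (hj : 1 ≤ j) (hjp : j ≤ p) :
    ((∑ n ∈ Finset.range (j + 1), cesK α n * cesK (α + 1) (j + p - n)) +
        ∑ n ∈ Finset.Icc (p + 1) (j + p), cesK α n * cesK (α + 1) (j + p - n)) ≤
      ((2 : ℝ) ^ (α + 1) * (1 + (1 - α) / (2 * (1 + α))) ^ α - 1) *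
        (cesK (α + 1) j * cesK (α + 1) p) := by
  have hA : (0:ℝ) < α + 1 := by linarith
  have hA1 : (1:ℝ) ≤ α + 1 := by linarith
  have hp : 1 ≤ p := le_trans hj hjp
  have hK1 := cesK_pos hA j
  have hK2 := cesK_pos hA p
  have hp0 : (0:ℝ) < p := by exact_mod_cast hp
  -- S1 bound
  have hS1 : (∑ n ∈ Finset.range (j + 1), cesK α n * cesK (α + 1) (j + p - n))
      ≤ (2:ℝ)^α * (cesK (α+1) j * cesK (α+1) p) := by
    have step1 : (∑ n ∈ Finset.range (j + 1), cesK α n * cesK (α + 1) (j + p - n))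
        ≤ ∑ n ∈ Finset.range (j + 1), cesK α n * cesK (α + 1) (j + p) := by
      apply Finset.sum_le_sum
      intro n _
      exact mul_le_mul_of_nonneg_left (cesK_mono hA1 (Nat.sub_le _ _)) (cesK_pos h0 n).le
    rw [← Finset.sum_mul, cesK_sum h0 j] at step1
    refine step1.trans ?_
    have hg := cesK_growth h0 h1.le hp j
    have h2a : (((p:ℝ)+j)/p) ^ α ≤ (2:ℝ)^α := by
      apply Real.rpow_le_rpow (by positivity) _ h0.le
      rw [div_le_iff₀ hp0]
      have : (j:ℝ) ≤ p := by exact_mod_cast hjp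
      linarith
    have hg2 : cesK (α+1) (j+p) ≤ (2:ℝ)^α * cesK (α+1) p := by
      rw [Nat.add_comm j p]
      exact hg.trans (mul_le_mul_of_nonneg_right h2a hK2.le)
    calc cesK (α+1) j * cesK (α+1) (j+p)
        ≤ cesK (α+1) j * ((2:ℝ)^α * cesK (α+1) p) :=
          mul_le_mul_of_nonneg_left hg2 hK1.le
      _ = (2:ℝ)^α * (cesK (α+1) j * cesK (α+1) p) := by ring
  -- S2 bound
  have hS2 : (∑ n ∈ Finset.Icc (p + 1) (j + p), cesK α n * cesK (α + 1) (j + p - n))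
      ≤ (α/(α+1)) * (cesK (α+1) j * cesK (α+1) p) := by
    have step1 : (∑ n ∈ Finset.Icc (p + 1) (j + p), cesK α n * cesK (α + 1) (j + p - n))
        ≤ ∑ n ∈ Finset.Icc (p + 1) (j + p), cesK α (p+1) * cesK (α + 1) (j + p - n) := by
      apply Finset.sum_le_sum
      intro n hn
      have hmem := Finset.mem_Icc.mp hn
      exact mul_le_mul_of_nonneg_right (cesK_anti h0 h1.le hmem.1) (cesK_pos hA _).le
    refine step1.trans ?_
    rw [← Finset.mul_sum]
    have hre : (∑ n ∈ Finset.Icc (p + 1) (j + p), cesK (α + 1) (j + p - n))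
        = ∑ m ∈ Finset.range j, cesK (α + 1) m := by
      apply Finset.sum_bij' (fun n _ => j + p - n) (fun m _ => j + p - m)
      · intro n hn
        have hmem := Finset.mem_Icc.mp hn
        rw [Finset.mem_range]
        omega
      · intro m hm
        have hmem := Finset.mem_range.mp hm
        rw [Finset.mem_Icc]
        omega
      · intro n hn
        have hmem := Finset.mem_Icc.mp hn
        omega
      · intro m hm
        have hmem := Finset.mem_range.mp hm
        omega
      · intro n _
        rfl
    rw [hre]
    obtain ⟨q, rfl⟩ : ∃ q, j = q + 1 := ⟨j - 1, (Nat.succ_pred_eq_of_pos hj).symm⟩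
    rw [cesK_sum hA q]
    have e1 : cesK ((α+1)+1) q = cesK (α+1) (q+1) * (((q:ℝ)+1)/(α+1)) := cesK_shift_succ hA q
    have e2 : cesK (α+1) p = cesK α (p+1) * (((p:ℝ)+1)/α) := cesK_shift_succ h0 p
    have hcp : cesK α (p+1) = cesK (α+1) p * (α/((p:ℝ)+1)) := by
      rw [e2]
      field_simp
    rw [e1, hcp]
    have hq1p : ((q:ℝ)+1) ≤ (p:ℝ)+1 := by
      have : (q:ℝ)+1 ≤ p := by exact_mod_cast hjp
      linarith
    have hfr : (α/((p:ℝ)+1)) * (((q:ℝ)+1)/(α+1)) ≤ α/(α+1) := by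
      rw [div_mul_div_comm, div_le_div_iff₀ (by positivity) (by positivity)]
      nlinarith [mul_le_mul_of_nonneg_left hq1p (by positivity : (0:ℝ) ≤ α*(α+1))]
    calc cesK (α+1) p * (α/((p:ℝ)+1)) * (cesK (α+1) (q+1) * (((q:ℝ)+1)/(α+1)))
        = ((α/((p:ℝ)+1)) * (((q:ℝ)+1)/(α+1))) * (cesK (α+1) (q+1) * cesK (α+1) p) := by
          ring
      _ ≤ (α/(α+1)) * (cesK (α+1) (q+1) * cesK (α+1) p) :=
          mul_le_mul_of_nonneg_right hfr (by positivity)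
  -- combine
  have hC := scalar_ineq h0 h1
  have hKK : (0:ℝ) ≤ cesK (α+1) j * cesK (α+1) p := by positivity
  have := mul_le_mul_of_nonneg_right hC hKK
  nlinarith [this, hS1, hS2]
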